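/- Let q > 1 be a real number. Every point w ∈ ℂ with |w| = q^{−1/2} lies in the closure of the set ⋃_{a≥1} {z ∈ ℂ : q^a·z^{2a−1} = 1}; that is, every point of the circle of radius q^{−1/2} centered at the origin is an accumulation point of the solutions of the equations q^a·z^{2a−1} = 1 for a = 1, 2, 3, …. -/

import Mathlib

noncomputable section
open Filter Real Complex Topology

/-- For real `q > 1`, every point `w` of the circle `|w| = q^{−1/2}`
lies in the closure of `⋃_{a≥1} {z ∈ ℂ : q^a z^{2a−1} = 1}`. -/
theorem stmt15 (q : ℝ) (hq : 1 < q) (w : ℂ) (hw : ‖w‖ = q ^ (-(1 : ℝ) / 2)) :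
    w ∈ closure (⋃ a : ℕ, ⋃ (_ : 1 ≤ a), {z : ℂ | (q : ℂ) ^ a * z ^ (2 * a - 1) = 1}) := by
  have hq0 : (0:ℝ) < q := lt_trans one_pos hq
  have hπ : (0:ℝ) < π := Real.pi_pos
  set θ : ℝ := w.arg with hθ
  set k : ℕ → ℤ := fun a => round (θ * (2*(a:ℝ)-1) / (2*π)) with hk
  set φ : ℕ → ℝ := fun a => 2*π*(k a) / (2*(a:ℝ)-1) with hφ
  set r : ℕ → ℝ := fun a => q ^ ((-(a:ℝ)) / (2*(a:ℝ)-1)) with hr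
  set z : ℕ → ℂ := fun a => (r a : ℂ) * Complex.exp ((φ a : ℂ) * Complex.I) with hz
  have hden : ∀ a : ℕ, 1 ≤ a → (2*(a:ℝ)-1) ≠ 0 := by
    intro a ha
    have : (1:ℝ) ≤ (a:ℝ) := by exact_mod_cast ha
    nlinarith
  -- membership
  have hmem : ∀ a : ℕ, 1 ≤ a →
      z a ∈ (⋃ a : ℕ, ⋃ (_ : 1 ≤ a), {z : ℂ | (q : ℂ) ^ a * z ^ (2 * a - 1) = 1}) := by
    intro a ha
    refine Set.mem_iUnion.2 ⟨a, Set.mem_iUnion.2 ⟨ha, ?_⟩⟩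
    have hn : ((2*a-1 : ℕ) : ℝ) = 2*(a:ℝ)-1 := by
      have : 1 ≤ 2*a := by omega
      push_cast [Nat.cast_sub this]; ring_nf
    have hd := hden a ha
    show (q : ℂ) ^ a * (z a) ^ (2*a-1) = 1
    have hrn : (r a) ^ (2*a-1) = q ^ (-(a:ℝ)) := by
      rw [hr, ← Real.rpow_natCast (q ^ _) (2*a-1), ← Real.rpow_mul hq0.le, hn]
      congr 1
      rw [div_mul_cancel₀ _ hd]
    have hexp : Complex.exp ((φ a : ℂ) * Complex.I) ^ (2*a-1) = Complex.exp ((k a : ℂ) * (2*π*Complex.I)) := by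
      rw [← Complex.exp_nat_mul]
      congr 1
      have hd' : (2*(a:ℂ)-1) ≠ 0 := by
        intro h
        apply hd
        have := congrArg Complex.re h
        simpa using this
      rw [hφ]
      push_cast [hn]
      field_simp
      rw [Nat.cast_sub (by omega : 1 ≤ 2 * a)]
      push_cast
      ring
    rw [hz]
    simp only [mul_pow, hexp]
    rw [Complex.exp_int_mul_two_pi_mul_I]
    have h1 : ((r a : ℂ)) ^ (2*a-1) = ((q ^ (-(a:ℝ)) : ℝ) : ℂ) := by
      rw [← hrn]; push_cast; ring
    rw [h1, mul_one]
    have h2 : q ^ (-(a:ℝ)) = (q ^ a)⁻¹ := by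
      rw [Real.rpow_neg hq0.le, Real.rpow_natCast]
    rw [h2]
    have hqa : (q:ℂ) ^ a ≠ 0 := pow_ne_zero _ (by exact_mod_cast hq0.ne')
    push_cast
    field_simp
  -- convergence of r
  have hrt : Tendsto (fun a : ℕ => r a) atTop (nhds (q ^ (-(1:ℝ)/2))) := by
    have h1 : Tendsto (fun a : ℕ => (-(a:ℝ)) / (2*(a:ℝ)-1)) atTop (nhds (-(1:ℝ)/2)) := by
      have h2 : Tendsto (fun a : ℕ => (-1 : ℝ) / (2 - 1/(a:ℝ))) atTop (nhds (-(1:ℝ)/2)) := by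
        have h0 := tendsto_one_div_atTop_nhds_zero_nat (𝕜 := ℝ)
        have h3 : Tendsto (fun a : ℕ => (2 : ℝ) - 1/(a:ℝ)) atTop (nhds 2) := by
          simpa using tendsto_const_nhds.sub h0
        have := (tendsto_const_nhds (x := (-1:ℝ))).div h3 (by norm_num)
        exact this
      refine h2.congr' ?_
      filter_upwards [eventually_ge_atTop 1] with a ha
      have ha' : (1:ℝ) ≤ (a:ℝ) := by exact_mod_cast ha
      have haz : (a:ℝ) ≠ 0 := by positivity
      have hd : (2*(a:ℝ)-1) ≠ 0 := hden a ha
      field_simp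
    exact (Real.continuousAt_const_rpow hq0.ne').tendsto.comp h1
  -- convergence of φ
  have hφt : Tendsto φ atTop (nhds θ) := by
    rw [tendsto_iff_norm_sub_tendsto_zero]
    apply squeeze_zero' (g := fun a : ℕ => π / (2*(a:ℝ)-1))
    · exact Eventually.of_forall fun a => norm_nonneg _
    · filter_upwards [eventually_ge_atTop 1] with a ha
      have hd : (2*(a:ℝ)-1) ≠ 0 := hden a ha
      have ha' : (1:ℝ) ≤ (a:ℝ) := by exact_mod_cast ha
      have hdpos : (0:ℝ) < 2*(a:ℝ)-1 := by nlinarith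
      have hb := abs_sub_round (θ * (2*(a:ℝ)-1) / (2*π))
      have key : φ a - θ = (2*π/(2*(a:ℝ)-1)) * ((k a : ℝ) - θ * (2*(a:ℝ)-1) / (2*π)) := by
        rw [hφ]
        field_simp
      rw [Real.norm_eq_abs, key, abs_mul, abs_sub_comm]
      have h2π : (0:ℝ) < 2*π/(2*(a:ℝ)-1) := by positivity
      calc |2*π/(2*(a:ℝ)-1)| * |θ * (2*(a:ℝ)-1) / (2*π) - (k a : ℝ)| 
          ≤ (2*π/(2*(a:ℝ)-1)) * (1/2) := by
            apply mul_le_mul (le_of_eq (abs_of_pos h2π)) hb (abs_nonneg _) h2π.le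
        _ = π / (2*(a:ℝ)-1) := by ring
    · have h3 : Tendsto (fun a : ℕ => (2*(a:ℝ)-1)) atTop atTop := by
        apply Filter.tendsto_atTop_add_const_right
        exact (tendsto_natCast_atTop_atTop).const_mul_atTop two_pos
      exact Tendsto.div_atTop tendsto_const_nhds h3
  -- z tends to w
  have hzt : Tendsto z atTop (nhds w) := by
    have h1 : Tendsto (fun a : ℕ => ((r a : ℝ) : ℂ)) atTop (nhds ((q ^ (-(1:ℝ)/2) : ℝ) : ℂ)) :=
      Complex.continuous_ofReal.continuousAt.tendsto.comp hrt
    have h2 : Tendsto (fun a : ℕ => Complex.exp ((φ a : ℂ) * Complex.I)) atTop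
        (nhds (Complex.exp ((θ : ℂ) * Complex.I))) := by
      apply (Complex.continuous_exp.tendsto _).comp
      exact ((Complex.continuous_ofReal.tendsto _).comp hφt).mul_const _
    have := h1.mul h2
    have hw' : ((q ^ (-(1:ℝ)/2) : ℝ) : ℂ) * Complex.exp ((θ : ℂ) * Complex.I) = w := by
      rw [← hw, hθ]
      have := Complex.norm_mul_exp_arg_mul_I w
      simpa using this
    rwa [hw'] at this
  exact mem_closure_of_tendsto hzt (by filter_upwards [eventually_ge_atTop 1] with a ha using hmem a ha)
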